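/- Let 0 < ε₁ < ε₂ < 1/2 and σ ∈ [ε₁, ε₂], p₁, p₂ > 0 with p₁ + p₂ ≤ 1. Define F(x) = f_{σ,ε₁,p₁}(−x) + f_{σ,ε₂,p₂}(x), where f_{σ,ε,p}(x) = (p+x)·f_c((pε+xσ)/(p+x)) and f_c(u) = 1 + u·log₂ u + (1−u)·log₂(1−u). Then F'(0) = log₂((1−ε₂)/(1−ε₁)) + σ·log₂(((1−ε₁)ε₂)/((1−ε₂)ε₁)) = (σ − φ(ε₁,ε₂))·log₂(((1−ε₁)ε₂)/((1−ε₂)ε₁)), where φ(ε₁,ε₂) = ln((1−ε₁)/(1−ε₂))/ln(((1−ε₁)ε₂)/((1−ε₂)ε₁)). -/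

import Mathlib

lemma tlogb (a b : ℝ) (ha : 0 < a) :
    HasDerivAt (fun x : ℝ => (a + x*b) * Real.logb 2 (a + x*b))
      (b * Real.logb 2 a + b / Real.log 2) 0 := by
  have hl : HasDerivAt (fun x : ℝ => a + x*b) b 0 :=
    (hasDerivAt_mul_const b).const_add a
  have h0 : a + (0:ℝ)*b ≠ 0 := by simpa using ha.ne'
  have hlog : HasDerivAt (fun x : ℝ => Real.log (a + x*b)) ((a + 0*b)⁻¹ * b) 0 :=
    (Real.hasDerivAt_log h0).comp (h₂ := Real.log) 0 hl
  have hlogb : HasDerivAt (fun x : ℝ => Real.logb 2 (a + x*b))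
      ((a + 0*b)⁻¹ * b / Real.log 2) 0 := by
    simpa [Real.logb] using hlog.div_const (Real.log 2)
  have := hl.mul hlogb
  refine this.congr_deriv ?_
  have ha' := ha.ne'
  simp only [zero_mul, add_zero]
  field_simp

lemma niceDeriv (p ε σ : ℝ) (hp : 0 < p) (hε : 0 < ε) (hε1 : ε < 1) :
    HasDerivAt (fun x : ℝ => (p + x) + (p*ε + x*σ) * Real.logb 2 (p*ε + x*σ)
      + (p*(1-ε) + x*(1-σ)) * Real.logb 2 (p*(1-ε) + x*(1-σ))
      - (p + x) * Real.logb 2 (p + x))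
      (1 + σ * Real.logb 2 ε + (1-σ) * Real.logb 2 (1-ε)) 0 := by
  have hA : 0 < p*ε := by positivity
  have hB : 0 < p*(1-ε) := by nlinarith
  have h1 : HasDerivAt (fun x : ℝ => p + x) 1 0 := (hasDerivAt_id 0).const_add p
  have h2 := tlogb (p*ε) σ hA
  have h3 := tlogb (p*(1-ε)) (1-σ) hB
  have h4 : HasDerivAt (fun x : ℝ => (p + x) * Real.logb 2 (p + x))
      (1 * Real.logb 2 p + 1 / Real.log 2) 0 := by
    simpa using tlogb p 1 hp
  have := ((h1.add h2).add h3).sub h4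
  refine this.congr_deriv ?_
  rw [Real.logb_mul hp.ne' hε.ne', Real.logb_mul hp.ne' (by linarith : (1:ℝ)-ε ≠ 0)]
  ring

lemma pointEq (p ε σ x : ℝ) (hpx : 0 < p + x) (hA : 0 < p*ε + x*σ)
    (hB : 0 < p*(1-ε) + x*(1-σ)) :
    (p + x) * (1 + ((p * ε + x * σ) / (p + x)) * Real.logb 2 ((p * ε + x * σ) / (p + x))
      + (1 - (p * ε + x * σ) / (p + x)) * Real.logb 2 (1 - (p * ε + x * σ) / (p + x)))
    = (p + x) + (p*ε + x*σ) * Real.logb 2 (p*ε + x*σ)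
      + (p*(1-ε) + x*(1-σ)) * Real.logb 2 (p*(1-ε) + x*(1-σ))
      - (p + x) * Real.logb 2 (p + x) := by
  have h1u : 1 - (p*ε + x*σ)/(p+x) = (p*(1-ε) + x*(1-σ))/(p+x) := by
    field_simp; ring
  rw [h1u, Real.logb_div hA.ne' hpx.ne', Real.logb_div hB.ne' hpx.ne']
  field_simp
  ring

set_option maxHeartbeats 1000000 in
theorem deriv_F_at_zero (ε₁ ε₂ σ p₁ p₂ : ℝ)
    (h1 : 0 < ε₁) (h12 : ε₁ < ε₂) (h2 : ε₂ < 1/2)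
    (hσ1 : ε₁ ≤ σ) (hσ2 : σ ≤ ε₂)
    (hp1 : 0 < p₁) (hp2 : 0 < p₂) (hp : p₁ + p₂ ≤ 1) :
    deriv (fun x : ℝ =>
        (p₁ + -x) * (1 + ((p₁ * ε₁ + (-x) * σ) / (p₁ + -x)) *
              Real.logb 2 ((p₁ * ε₁ + (-x) * σ) / (p₁ + -x))
            + (1 - (p₁ * ε₁ + (-x) * σ) / (p₁ + -x)) *
              Real.logb 2 (1 - (p₁ * ε₁ + (-x) * σ) / (p₁ + -x)))
        + (p₂ + x) * (1 + ((p₂ * ε₂ + x * σ) / (p₂ + x)) *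
              Real.logb 2 ((p₂ * ε₂ + x * σ) / (p₂ + x))
            + (1 - (p₂ * ε₂ + x * σ) / (p₂ + x)) *
              Real.logb 2 (1 - (p₂ * ε₂ + x * σ) / (p₂ + x)))) 0
      = Real.logb 2 ((1 - ε₂) / (1 - ε₁)) + σ * Real.logb 2 (((1 - ε₁) * ε₂) / ((1 - ε₂) * ε₁)) ∧
    Real.logb 2 ((1 - ε₂) / (1 - ε₁)) + σ * Real.logb 2 (((1 - ε₁) * ε₂) / ((1 - ε₂) * ε₁))
      = (σ - Real.log ((1 - ε₁) / (1 - ε₂)) / Real.log (((1 - ε₁) * ε₂) / ((1 - ε₂) * ε₁))) *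
          Real.logb 2 (((1 - ε₁) * ε₂) / ((1 - ε₂) * ε₁)) := by
  have hε11 : ε₁ < 1 := by linarith
  have hε21 : ε₂ < 1 := by linarith
  have hε2pos : 0 < ε₂ := lt_trans h1 h12
  have hσpos : 0 < σ := lt_of_lt_of_le h1 hσ1
  have hσ1' : σ < 1 := by linarith
  constructor
  · -- derivative computation
    have hn1 := niceDeriv p₁ ε₁ σ hp1 h1 hε11
    have hn2 := niceDeriv p₂ ε₂ σ hp2 hε2pos hε21
    have hneg : HasDerivAt (fun x : ℝ => -x) (-1) (0:ℝ) := hasDerivAt_neg 0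
    have hn1neg : HasDerivAt (fun x : ℝ =>
        (p₁ + -x) + (p₁*ε₁ + (-x)*σ) * Real.logb 2 (p₁*ε₁ + (-x)*σ)
        + (p₁*(1-ε₁) + (-x)*(1-σ)) * Real.logb 2 (p₁*(1-ε₁) + (-x)*(1-σ))
        - (p₁ + -x) * Real.logb 2 (p₁ + -x))
        ((1 + σ * Real.logb 2 ε₁ + (1-σ) * Real.logb 2 (1-ε₁)) * (-1)) 0 := by
      have hn1' := hn1
      rw [show (0:ℝ) = -0 by norm_num] at hn1'
      exact hn1'.comp (0:ℝ) hneg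
    have hF := hn1neg.add hn2
    have hδ : 0 < min (p₁*ε₁) (p₂*ε₂) := lt_min (by positivity) (by positivity)
    have hEq : (fun x : ℝ =>
        (p₁ + -x) * (1 + ((p₁ * ε₁ + (-x) * σ) / (p₁ + -x)) *
              Real.logb 2 ((p₁ * ε₁ + (-x) * σ) / (p₁ + -x))
            + (1 - (p₁ * ε₁ + (-x) * σ) / (p₁ + -x)) *
              Real.logb 2 (1 - (p₁ * ε₁ + (-x) * σ) / (p₁ + -x)))
        + (p₂ + x) * (1 + ((p₂ * ε₂ + x * σ) / (p₂ + x)) *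
              Real.logb 2 ((p₂ * ε₂ + x * σ) / (p₂ + x))
            + (1 - (p₂ * ε₂ + x * σ) / (p₂ + x)) *
              Real.logb 2 (1 - (p₂ * ε₂ + x * σ) / (p₂ + x))))
        =ᶠ[nhds (0:ℝ)] (fun x : ℝ =>
        ((p₁ + -x) + (p₁*ε₁ + (-x)*σ) * Real.logb 2 (p₁*ε₁ + (-x)*σ)
        + (p₁*(1-ε₁) + (-x)*(1-σ)) * Real.logb 2 (p₁*(1-ε₁) + (-x)*(1-σ))
        - (p₁ + -x) * Real.logb 2 (p₁ + -x))
        + ((p₂ + x) + (p₂*ε₂ + x*σ) * Real.logb 2 (p₂*ε₂ + x*σ)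
        + (p₂*(1-ε₂) + x*(1-σ)) * Real.logb 2 (p₂*(1-ε₂) + x*(1-σ))
        - (p₂ + x) * Real.logb 2 (p₂ + x))) := by
      filter_upwards [Metric.ball_mem_nhds (0:ℝ) hδ] with x hx
      rw [Metric.mem_ball, Real.dist_eq, sub_zero] at hx
      obtain ⟨hx1, hx2⟩ := abs_lt.mp hx
      clear hn1 hn2 hneg hn1neg hF hx
      have hm1 : x < p₁*ε₁ := lt_of_lt_of_le hx2 (min_le_left _ _)
      have hm2 : -(p₂*ε₂) < x := by
        have := min_le_right (p₁*ε₁) (p₂*ε₂); linarith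
      have hσ' : 0 < 1 - σ := by linarith
      have h1e1 : (0:ℝ) < 1 - ε₁ := by linarith
      have h1e2 : (0:ℝ) < 1 - ε₂ := by linarith
      have ha1 : 0 < p₁*ε₁ - x := by linarith
      have ha2 : 0 < p₁*(1-ε₁) - x := by
        nlinarith [mul_pos hp1 (by linarith : (0:ℝ) < 1 - 2*ε₁)]
      have hb1 : 0 < p₂*ε₂ + x := by linarith
      have hb2 : 0 < p₂*(1-ε₂) + x := by
        nlinarith [mul_pos hp2 (by linarith : (0:ℝ) < 1 - 2*ε₂)]
      have e1 := pointEq p₁ ε₁ σ (-x)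
        (by nlinarith [mul_pos hp1 h1e1])
        (by nlinarith [mul_pos hσpos ha1, mul_pos hσ' (mul_pos hp1 h1)])
        (by nlinarith [mul_pos hσ' ha2, mul_pos hσpos (mul_pos hp1 h1e1)])
      have e2 := pointEq p₂ ε₂ σ x
        (by nlinarith [mul_pos hp2 h1e2])
        (by nlinarith [mul_pos hσpos hb1, mul_pos hσ' (mul_pos hp2 hε2pos)])
        (by nlinarith [mul_pos hσ' hb2, mul_pos hσpos (mul_pos hp2 h1e2)])
      rw [e1, e2]
    rw [hEq.deriv_eq.trans hF.deriv]
    have hne1 : (1:ℝ) - ε₁ ≠ 0 := by linarith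
    have hne2 : (1:ℝ) - ε₂ ≠ 0 := by linarith
    have hmul1 : ((1:ℝ) - ε₁) * ε₂ ≠ 0 := by positivity
    have hmul2 : ((1:ℝ) - ε₂) * ε₁ ≠ 0 := by positivity
    simp only [Real.logb]
    rw [Real.log_div hne2 hne1, Real.log_div hmul1 hmul2,
      Real.log_mul hne1 hε2pos.ne', Real.log_mul hne2 h1.ne']
    ring
  · -- algebraic identity
    have hne1 : (1:ℝ) - ε₁ ≠ 0 := by linarith
    have hne2 : (1:ℝ) - ε₂ ≠ 0 := by linarith
    have hmul1 : ((1:ℝ) - ε₁) * ε₂ ≠ 0 := by positivity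
    have hmul2 : ((1:ℝ) - ε₂) * ε₁ ≠ 0 := by positivity
    have hr : 1 < ((1 - ε₁) * ε₂) / ((1 - ε₂) * ε₁) := by
      rw [lt_div_iff₀ (by nlinarith)]; nlinarith
    have hL : 0 < Real.log (((1 - ε₁) * ε₂) / ((1 - ε₂) * ε₁)) := Real.log_pos hr
    have hl2 : Real.log 2 ≠ 0 := (Real.log_pos one_lt_two).ne'
    simp only [Real.logb]
    rw [Real.log_div hne2 hne1, Real.log_div hne1 hne2]
    rw [Real.log_div hmul1 hmul2] at hL ⊢
    generalize Real.log ((1 - ε₁) * ε₂) - Real.log ((1 - ε₂) * ε₁) = L at hL ⊢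
    field_simp
    ring
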